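/- Let J : ℝ^d → ℝ be convex, let x* minimize J, and let {x^{(i)}} be generated by x^{(i+1)} = x^{(i)} − α^{(i)} g^{(i)}/max{‖g^{(i)}‖, 1}, where each g^{(i)} is an ε_SA-subgradient of J at x^{(i)} and ‖g^{(i)}‖ ≤ L for all i. Then for any r ≥ 1, min_{0≤k≤r} J(x^{(k)}) − J(x*) ≤ μ·(‖x^{(0)} − x*‖² + ∑_{i=0}^r (α^{(i)})²)/(2∑_{i=0}^r α^{(i)}) + μ·ε_SA, where μ := max{L, 1}. -/

import Mathlib

open Finset
open scoped RealInnerProductSpace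

set_option maxHeartbeats 1000000 in
theorem stmt5 (d : ℕ) (J : EuclideanSpace ℝ (Fin d) → ℝ)
    (hJ : ConvexOn ℝ Set.univ J)
    (xstar : EuclideanSpace ℝ (Fin d)) (hmin : ∀ z, J xstar ≤ J z)
    (x g : ℕ → EuclideanSpace ℝ (Fin d)) (α : ℕ → ℝ) (hα : ∀ i, 0 < α i)
    (εSA L : ℝ) (hL : ∀ i, ‖g i‖ ≤ L)
    (hsub : ∀ i z, J z ≥ J (x i) + ⟪g i, z - x i⟫ - εSA)
    (hupd : ∀ i, x (i + 1) = x i - (α i / max ‖g i‖ 1) • g i)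
    (r : ℕ) (hr : 1 ≤ r) :
    ∃ k ≤ r, J (x k) - J xstar ≤
      max L 1 * (‖x 0 - xstar‖ ^ 2 + ∑ i ∈ Finset.range (r + 1), (α i) ^ 2) /
        (2 * ∑ i ∈ Finset.range (r + 1), α i) + max L 1 * εSA := by
  by_contra hcon
  push_neg at hcon
  obtain ⟨μ, hμdef⟩ : ∃ t : ℝ, t = max L 1 := ⟨_, rfl⟩
  obtain ⟨S, hSdef⟩ : ∃ t : ℝ, t = ∑ i ∈ Finset.range (r+1), α i := ⟨_, rfl⟩
  obtain ⟨Q, hQdef⟩ : ∃ t : ℝ, t = ∑ i ∈ Finset.range (r+1), (α i)^2 := ⟨_, rfl⟩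
  obtain ⟨D, hDdef⟩ : ∃ t : ℝ, t = ‖x 0 - xstar‖^2 := ⟨_, rfl⟩
  rw [← hμdef, ← hSdef, ← hQdef, ← hDdef] at hcon
  obtain ⟨B, hBdef⟩ : ∃ t : ℝ, t = μ * (D + Q) / (2*S) + μ * εSA := ⟨_, rfl⟩
  rw [← hBdef] at hcon
  have hμ1 : (1:ℝ) ≤ μ := hμdef ▸ le_max_right _ _
  have hμ0 : (0:ℝ) < μ := by linarith
  have hε : 0 ≤ εSA := by
    have h1 := hsub 0 (x 0)
    simp only [sub_self, inner_zero_right] at h1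
    linarith
  have hS : 0 < S := hSdef ▸ Finset.sum_pos (fun i _ => hα i) (by simp)
  have hQ : 0 ≤ Q := hQdef ▸ Finset.sum_nonneg (fun i _ => sq_nonneg _)
  have hD : 0 ≤ D := hDdef ▸ sq_nonneg _
  have hfrac : 0 ≤ μ * (D + Q) / (2*S) := by positivity
  have hεμ : εSA ≤ μ * εSA := le_mul_of_one_le_left hε hμ1
  have hBε : εSA ≤ B := by rw [hBdef]; linarith
  -- per-step inequality
  have step : ∀ i ≤ r, ‖x (i+1) - xstar‖^2 <
      ‖x i - xstar‖^2 + ((α i)^2 - 2*(α i/μ)*(B-εSA)) := by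
    intro i hi
    have hupdi := hupd i
    obtain ⟨m, hmdef⟩ : ∃ t : ℝ, t = max ‖g i‖ 1 := ⟨_, rfl⟩
    rw [← hmdef] at hupdi
    have hm1 : (1:ℝ) ≤ m := hmdef ▸ le_max_right _ _
    have hm0 : (0:ℝ) < m := by linarith
    have hmμ : m ≤ μ := by rw [hmdef, hμdef]; exact max_le_max (hL i) le_rfl
    have hgm : ‖g i‖ ≤ m := hmdef ▸ le_max_left _ _
    obtain ⟨c, hcdef⟩ : ∃ t : ℝ, t = α i / m := ⟨_, rfl⟩
    rw [← hcdef] at hupdi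
    have hc : 0 < c := hcdef ▸ div_pos (hα i) hm0
    have hA : J (x i) - J xstar - εSA ≤ ⟪g i, x i - xstar⟫ := by
      have h1 := hsub i xstar
      have h2 : ⟪g i, xstar - x i⟫ = -⟪g i, x i - xstar⟫ := by
        rw [← inner_neg_right, neg_sub]
      rw [h2] at h1; linarith
    have hAB : B - εSA < ⟪g i, x i - xstar⟫ := by
      have h3 := hcon i hi
      linarith
    have hexp : ‖x (i+1) - xstar‖^2 =
        ‖x i - xstar‖^2 - 2*(c*⟪g i, x i - xstar⟫) + c^2*‖g i‖^2 := by
      rw [hupdi]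
      have h4 : x i - c • g i - xstar = (x i - xstar) - c • g i := by abel
      rw [h4, norm_sub_sq_real, real_inner_smul_right, norm_smul,
        real_inner_comm]
      rw [mul_pow, Real.norm_eq_abs, sq_abs]
      try ring
    have hb1 : c * ‖g i‖ ≤ α i :=
      calc c * ‖g i‖ ≤ c * m := mul_le_mul_of_nonneg_left hgm hc.le
        _ = α i := by rw [hcdef]; field_simp
    have hb1' : c^2 * ‖g i‖^2 ≤ (α i)^2 := by
      have h5 := mul_self_le_mul_self (mul_nonneg hc.le (norm_nonneg (g i))) hb1
      nlinarith [h5]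
    have hcμ : α i / μ ≤ c := by
      rw [hcdef]
      exact div_le_div_of_nonneg_left (hα i).le hm0 hmμ
    have h0Bε : 0 ≤ B - εSA := by linarith
    have hb2 : 2*(α i/μ)*(B-εSA) < 2*(c*⟪g i, x i - xstar⟫) := by
      have h3 : (α i/μ)*(B-εSA) ≤ c*(B-εSA) := mul_le_mul_of_nonneg_right hcμ h0Bε
      have h4 : c*(B-εSA) < c*⟪g i, x i - xstar⟫ := mul_lt_mul_of_pos_left hAB hc
      nlinarith [h3, h4]
    rw [hexp]
    linarith
  -- telescoping by induction
  have main : ∀ n, 1 ≤ n → n ≤ r+1 →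
      ‖x n - xstar‖^2 < D + ∑ i ∈ Finset.range n, ((α i)^2 - 2*(α i/μ)*(B-εSA)) := by
    intro n
    induction n with
    | zero => intro h; omega
    | succ k ih =>
      intro _ hk
      rcases Nat.eq_zero_or_pos k with hk0 | hk1
      · subst hk0
        have h5 := step 0 (by omega)
        rw [Finset.sum_range_one, hDdef]
        linarith
      · have h1 := step k (by omega)
        have h2 := ih hk1 (by omega)
        rw [Finset.sum_range_succ]
        linarith
  have hfin := main (r+1) (by omega) le_rfl
  have hsum : ∑ i ∈ Finset.range (r+1), ((α i)^2 - 2*(α i/μ)*(B-εSA))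
      = Q - (2*(B-εSA)/μ) * S := by
    rw [hQdef, hSdef, Finset.mul_sum, ← Finset.sum_sub_distrib]
    exact Finset.sum_congr rfl (fun i _ => by ring)
  rw [hsum] at hfin
  have hnn : 0 ≤ ‖x (r+1) - xstar‖^2 := sq_nonneg _
  have hlt : 2*(B-εSA)/μ * S < D + Q := by linarith
  have h6 : 2*(B-εSA)*S < (D+Q)*μ := by
    have hmul := mul_lt_mul_of_pos_right hlt hμ0
    have heq : 2*(B-εSA)/μ * S * μ = 2*(B-εSA)*S := by
      rw [div_mul_eq_mul_div, div_mul_cancel₀ _ hμ0.ne']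
    rw [heq] at hmul
    exact hmul
  have hge : μ*(D+Q)/(2*S) ≤ B - εSA := by rw [hBdef]; linarith
  have h7 : μ*(D+Q) ≤ (B-εSA)*(2*S) :=
    calc μ*(D+Q) = μ*(D+Q)/(2*S)*(2*S) :=
        (div_mul_cancel₀ _ (by positivity : (2*S:ℝ) ≠ 0)).symm
      _ ≤ (B-εSA)*(2*S) := mul_le_mul_of_nonneg_right hge (by positivity)
  nlinarith [h6, h7]
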